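/- arXiv:2105.13100 — 4 statements merged into one kernel-verified Lean document; each statement's English description precedes it below -/
import Mathlib

section
/- Let $K \subseteq \mathbb{R}^n$ be a closed convex set with nonempty interior that is strictly convex, i.e. its topological boundary $\partial K$ contains no nondegenerate line segment. Then for every $v \neq 0$ the following are equivalent: (a) $v$ is a recession direction of $K$; (b) for every boundary point $p \in \partial K$ and every outward normal $\nu \neq 0$ of $K$ at $p$ (meaning $\langle x - p, \nu\rangle \le 0$ for all $x \in K$), one has $\langle \nu, v\rangle < 0$. -/
open scoped RealInnerProductSpace

/-- If `ν` is an outward normal of `K` at `p`, then any point of `K` lying on the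
supporting hyperplane is not an interior point of `K`. -/
lemma aux_not_interior {n : ℕ} {K : Set (EuclideanSpace ℝ (Fin n))}
    {p x ν : EuclideanSpace ℝ (Fin n)} (hν : ν ≠ 0)
    (hsupp : ∀ y ∈ K, ⟪y - p, ν⟫ ≤ 0) (hxp : ⟪x - p, ν⟫ = 0) :
    x ∉ interior K := by
  intro hxint
  obtain ⟨ε, hε, hball⟩ := Metric.isOpen_iff.1 isOpen_interior x hxint
  have hνn : 0 < ‖ν‖ := norm_pos_iff.2 hν
  set δ : ℝ := ε / (2 * ‖ν‖) with hδ
  have hδpos : 0 < δ := by positivity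
  have hy : x + δ • ν ∈ K := by
    apply interior_subset
    apply hball
    simp only [Metric.mem_ball, dist_eq_norm]
    have : x + δ • ν - x = δ • ν := by abel
    rw [this, norm_smul, Real.norm_eq_abs, abs_of_pos hδpos, hδ]
    rw [div_mul_eq_mul_div, mul_comm]
    rw [div_lt_iff₀ (by positivity)]
    nlinarith
  have := hsupp _ hy
  have hcalc : ⟪x + δ • ν - p, ν⟫ = ⟪x - p, ν⟫ + δ * ‖ν‖ ^ 2 := by
    have : x + δ • ν - p = (x - p) + δ • ν := by abel
    rw [this, inner_add_left, real_inner_smul_left, real_inner_self_eq_norm_sq]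
  rw [hcalc, hxp, zero_add] at this
  have : 0 < δ * ‖ν‖ ^ 2 := by positivity
  linarith

/-- For a closed, strictly convex set `K ⊆ ℝⁿ` with nonempty interior
(strict convexity meaning that the boundary contains no nondegenerate
segment), a nonzero vector `v` is a recession direction of `K` if and only if
`⟨ν, v⟩ < 0` for every outward normal `ν` at every boundary point of `K`. -/
theorem recession_iff_normals_negative (n : ℕ) (K : Set (EuclideanSpace ℝ (Fin n)))
    (hclosed : IsClosed K) (hconv : Convex ℝ K)
    (hint : (interior K).Nonempty)
    (hstrict : ∀ x ∈ frontier K, ∀ y ∈ frontier K, segment ℝ x y ⊆ frontier K → x = y)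
    (v : EuclideanSpace ℝ (Fin n)) (hv : v ≠ 0) :
    (∀ p ∈ K, ∀ s : ℝ, 0 ≤ s → p + s • v ∈ K) ↔
      (∀ p ∈ frontier K, ∀ ν : EuclideanSpace ℝ (Fin n), ν ≠ 0 →
        (∀ x ∈ K, ⟪x - p, ν⟫ ≤ 0) → ⟪ν, v⟫ < 0) := by
  constructor
  · intro hrec p hp ν hν hsupp
    have hpK : p ∈ K := hclosed.frontier_subset hp
    have hle : ⟪v, ν⟫ ≤ 0 := by
      have h1 : p + (1 : ℝ) • v ∈ K := hrec p hpK 1 zero_le_one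
      have := hsupp _ h1
      simpa using this
    by_contra hge
    push_neg at hge
    have heq : ⟪v, ν⟫ = 0 := le_antisymm hle (by rwa [real_inner_comm] at hge)
    -- the segment from p to p + v lies in the frontier
    have hseg : segment ℝ p (p + v) ⊆ frontier K := by
      intro x hx
      obtain ⟨a, b, ha, hb, hab, hx⟩ := hx
      have hxe : x = p + b • v := by
        rw [← hx]
        rw [smul_add]
        have : a • p + b • p = p := by
          rw [← add_smul, hab, one_smul]
        rw [← add_assoc, this]
      have hxK : x ∈ K := by rw [hxe]; exact hrec p hpK b hb
      have hxin : ⟪x - p, ν⟫ = 0 := by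
        rw [hxe]
        have : p + b • v - p = b • v := by abel
        rw [this, real_inner_smul_left, heq, mul_zero]
      rw [hclosed.frontier_eq]
      exact ⟨hxK, aux_not_interior hν hsupp hxin⟩
    have := hstrict p hp (p + v) (hseg (right_mem_segment ℝ p (p + v))) hseg
    exact hv (by simpa using this.symm)
  · intro hnorm p hp s hs
    by_contra hz
    have hs0 : 0 < s := by
      rcases hs.lt_or_eq with h | h
      · exact h
      · exact absurd (by simpa [← h] using hp) hz
    set z := p + s • v with hzdef
    obtain ⟨w, hwK, hmin⟩ := exists_norm_eq_iInf_of_complete_convex ⟨p, hp⟩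
      (hclosed.isComplete) hconv z
    have hproj := (norm_eq_iInf_iff_real_inner_le_zero hconv hwK).1 hmin
    set ν := z - w with hνdef
    have hν : ν ≠ 0 := sub_ne_zero.2 (fun h => hz (h ▸ hwK))
    have hsupp : ∀ x ∈ K, ⟪x - w, ν⟫ ≤ 0 := fun x hx => by
      rw [real_inner_comm]; exact hproj x hx
    have hwfr : w ∈ frontier K := by
      rw [hclosed.frontier_eq]
      refine ⟨hwK, aux_not_interior hν hsupp ?_⟩
      simp
    have hlt := hnorm w hwfr ν hν hsupp
    have hple := hsupp p hp
    have hpw : p - w = ν - s • v := by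
      rw [hνdef, hzdef]; abel
    rw [hpw, inner_sub_left, real_inner_self_eq_norm_sq, real_inner_smul_left,
      real_inner_comm] at hple
    have hνn : 0 < ‖ν‖ := norm_pos_iff.2 hν
    nlinarith
end

section
/- Let $K \subseteq \mathbb{R}^n$ be a convex set, let $p \in K$, and let $v \in \mathbb{R}^n$ be such that $p + s v \in K$ for every $s \ge 0$. Then the function $s \mapsto \operatorname{dist}(p + s v, \mathbb{R}^n\setminus K)$ is concave and nondecreasing on $[0, \infty)$. -/
open Metric Filter

/-- On a convex set, the distance to the complement is concave. -/
lemma infDist_compl_concaveOn {E : Type*} [NormedAddCommGroup E] [NormedSpace ℝ E]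
    {K : Set E} (hK : Convex ℝ K) : ConcaveOn ℝ K (fun x => infDist x Kᶜ) := by
  rcases Set.eq_empty_or_nonempty Kᶜ with h | hne
  · simp only [h, infDist_empty]
    exact concaveOn_const 0 hK
  refine ⟨hK, fun x hx y hy a b ha hb hab => ?_⟩
  set r := infDist x Kᶜ with hr
  set s := infDist y Kᶜ with hs
  have hr0 : 0 ≤ r := infDist_nonneg
  have hs0 : 0 ≤ s := infDist_nonneg
  have hars : 0 ≤ a * r + b * s := by positivity
  rcases eq_or_lt_of_le hars with h0 | h0
  · exact h0 ▸ infDist_nonneg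
  by_contra hcon
  push_neg at hcon
  obtain ⟨w, hw, hdw⟩ := (infDist_lt_iff hne).1 hcon
  -- decompose the displacement
  set u := w - (a • x + b • y) with hu
  have hun : ‖u‖ < a * r + b * s := by
    rw [hu, ← dist_eq_norm']
    exact hdw
  have hx' : x + (r / (a * r + b * s)) • u ∈ K := by
    rcases eq_or_lt_of_le hr0 with hr' | hr'
    · simp [← hr']
      exact hx
    by_contra hxK
    have : r ≤ dist x (x + (r / (a * r + b * s)) • u) := infDist_le_dist_of_mem hxK
    rw [dist_self_add_right, norm_smul, Real.norm_eq_abs,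
      abs_of_nonneg (by positivity), div_mul_eq_mul_div, le_div_iff₀ h0] at this
    nlinarith [norm_nonneg u]
  have hy' : y + (s / (a * r + b * s)) • u ∈ K := by
    rcases eq_or_lt_of_le hs0 with hs' | hs'
    · simp [← hs']
      exact hy
    by_contra hyK
    have : s ≤ dist y (y + (s / (a * r + b * s)) • u) := infDist_le_dist_of_mem hyK
    rw [dist_self_add_right, norm_smul, Real.norm_eq_abs,
      abs_of_nonneg (by positivity), div_mul_eq_mul_div, le_div_iff₀ h0] at this
    nlinarith [norm_nonneg u]
  have hwK : w ∈ K := by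
    have hmem := hK hx' hy' ha hb hab
    have hc : a * (r / (a * r + b * s)) + b * (s / (a * r + b * s)) = 1 := by
      field_simp
    have heq : a • (x + (r / (a * r + b * s)) • u) + b • (y + (s / (a * r + b * s)) • u) = w := by
      rw [smul_add, smul_add, smul_smul, smul_smul]
      calc a • x + (a * (r / (a * r + b * s))) • u + (b • y + (b * (s / (a * r + b * s))) • u)
          = (a • x + b • y) + (a * (r / (a * r + b * s)) + b * (s / (a * r + b * s))) • u := by
            rw [add_smul]; abel
        _ = w := by rw [hc, one_smul, hu]; abel
    rwa [heq] at hmem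
  exact hw hwK

/-- A nonnegative concave function on `[0, ∞)` is nondecreasing. -/
lemma monotoneOn_of_concaveOn_nonneg {f : ℝ → ℝ} (hf : ConcaveOn ℝ (Set.Ici 0) f)
    (h0 : ∀ x ∈ Set.Ici (0:ℝ), 0 ≤ f x) : MonotoneOn f (Set.Ici 0) := by
  intro a ha b hb hab
  rcases eq_or_lt_of_le hab with rfl | hab'
  · exact le_rfl
  have key : ∀ c, b < c → ((c - b) / (c - a)) * f a ≤ f b := by
    intro c hc
    have hac : a < c := lt_trans hab' hc
    have h1 : (0:ℝ) ≤ (c - b) / (c - a) := by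
      apply div_nonneg <;> linarith
    have h2 : (0:ℝ) ≤ (b - a) / (c - a) := by
      apply div_nonneg <;> linarith
    have hca : c - a ≠ 0 := by linarith
    have hsum : (c - b) / (c - a) + (b - a) / (c - a) = 1 := by
      rw [← add_div]
      field_simp
      ring
    have hcomb : ((c - b) / (c - a)) • a + ((b - a) / (c - a)) • c = b := by
      rw [smul_eq_mul, smul_eq_mul]
      field_simp
      ring
    have hcmem : c ∈ Set.Ici (0:ℝ) := Set.mem_Ici.2 (by have := ha.out; linarith)
    have := hf.2 ha hcmem h1 h2 hsum
    rw [hcomb] at this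
    have hfc : 0 ≤ f c := h0 c (Set.mem_Ici.2 (le_trans (le_trans ha.out hab) hc.le))
    calc ((c - b) / (c - a)) * f a
        ≤ ((c - b) / (c - a)) * f a + ((b - a) / (c - a)) * f c := by nlinarith
      _ ≤ f b := this
  -- take the limit c → ∞
  have hlim : Tendsto (fun c : ℝ => ((c - b) / (c - a)) * f a) atTop (nhds (f a)) := by
    have h1 : Tendsto (fun c : ℝ => (c - b) / (c - a)) atTop (nhds 1) := by
      have : (fun c : ℝ => (c - b) / (c - a)) =ᶠ[atTop] fun c => 1 + (a - b) / (c - a) := by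
        filter_upwards [eventually_gt_atTop a] with c hc
        have : c - a ≠ 0 := by linarith
        field_simp
        ring
      rw [tendsto_congr' this]
      have h2 : Tendsto (fun c : ℝ => (a - b) / (c - a)) atTop (nhds 0) := by
        apply Tendsto.div_atTop tendsto_const_nhds
        exact tendsto_atTop_add_const_right _ _ tendsto_id
      simpa using (tendsto_const_nhds (x := (1:ℝ))).add h2
    simpa using h1.mul tendsto_const_nhds
  exact le_of_tendsto hlim (by filter_upwards [eventually_gt_atTop b] with c hc using key c hc)

/-- If `K ⊆ ℝⁿ` is convex, `p ∈ K` and `p + s v ∈ K` for all `s ≥ 0`, then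
`s ↦ dist(p + s v, Kᶜ)` is concave and nondecreasing on `[0, ∞)`. -/
theorem dist_along_ray_concave_monotone (n : ℕ) (K : Set (EuclideanSpace ℝ (Fin n)))
    (hconv : Convex ℝ K) (p : EuclideanSpace ℝ (Fin n)) (hp : p ∈ K)
    (v : EuclideanSpace ℝ (Fin n)) (hray : ∀ s : ℝ, 0 ≤ s → p + s • v ∈ K) :
    ConcaveOn ℝ (Set.Ici 0) (fun s : ℝ => Metric.infDist (p + s • v) Kᶜ) ∧
    MonotoneOn (fun s : ℝ => Metric.infDist (p + s • v) Kᶜ) (Set.Ici 0) := by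
  have hconc : ConcaveOn ℝ (Set.Ici 0) (fun s : ℝ => Metric.infDist (p + s • v) Kᶜ) := by
    have h1 := (infDist_compl_concaveOn hconv).comp_affineMap
      (AffineMap.lineMap p (p + v) : ℝ →ᵃ[ℝ] EuclideanSpace ℝ (Fin n))
    have h2 : (fun x => infDist x Kᶜ) ∘ (AffineMap.lineMap p (p + v)) =
        fun s : ℝ => Metric.infDist (p + s • v) Kᶜ := by
      funext s
      simp [AffineMap.lineMap_apply]
      congr 1
      abel
    rw [h2] at h1
    refine h1.subset ?_ (convex_Ici 0)
    intro s hs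
    simp only [Set.mem_preimage, AffineMap.lineMap_apply, vsub_eq_sub, vadd_eq_add]
    have hv : p + v - p = v := by abel
    rw [hv, add_comm]
    exact hray s hs
  exact ⟨hconc, monotoneOn_of_concaveOn_nonneg hconc (fun x _ => infDist_nonneg)⟩
end

section
/- Let $f : \mathbb{R}^2 \to \mathbb{R}$ be continuous on $[-3,3] \times [-1,1]$ and suppose that for each fixed $x_2 \in [-1,1]$ the function $x_1 \mapsto f(x_1, x_2)$ is concave on $[-3,3]$. Then $\int_{-3}^{3}\int_{-1}^{1} f(x_1,x_2)\, dx_2\, dx_1 \le 3 \int_{-1}^{1}\int_{-1}^{1} f(x_1,x_2)\, dx_2\, dx_1$. -/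
open MeasureTheory intervalIntegral Set

/-- Brunn-type integral comparison: if `f` is continuous on `[-3,3] × [-1,1]`
and concave in the first variable, then
`∫_{-3}^{3}∫_{-1}^{1} f ≤ 3 ∫_{-1}^{1}∫_{-1}^{1} f`. -/
theorem concave_integral_comparison (f : ℝ → ℝ → ℝ)
    (hcont : ContinuousOn (fun p : ℝ × ℝ => f p.1 p.2)
      (Set.Icc (-3 : ℝ) 3 ×ˢ Set.Icc (-1 : ℝ) 1))
    (hconc : ∀ x2 ∈ Set.Icc (-1 : ℝ) 1,
      ConcaveOn ℝ (Set.Icc (-3 : ℝ) 3) (fun x1 => f x1 x2)) :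
    (∫ x1 in (-3 : ℝ)..3, ∫ x2 in (-1 : ℝ)..1, f x1 x2) ≤
      3 * ∫ x1 in (-1 : ℝ)..1, ∫ x2 in (-1 : ℝ)..1, f x1 x2 := by
  set c1 : ℝ → ℝ := fun x => min 3 (max (-3) x) with hc1
  set c2 : ℝ → ℝ := fun x => min 1 (max (-1) x) with hc2
  have hc1mem : ∀ x, c1 x ∈ Set.Icc (-3 : ℝ) 3 := fun x => by
    constructor
    · exact le_min (by norm_num) (le_max_left _ _)
    · exact min_le_left _ _
  have hc2mem : ∀ x, c2 x ∈ Set.Icc (-1 : ℝ) 1 := fun x => by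
    constructor
    · exact le_min (by norm_num) (le_max_left _ _)
    · exact min_le_left _ _
  have hc1eq : ∀ x ∈ Set.Icc (-3 : ℝ) 3, c1 x = x := fun x hx => by
    simp only [hc1, max_eq_right hx.1, min_eq_right hx.2]
  have hc2eq : ∀ x ∈ Set.Icc (-1 : ℝ) 1, c2 x = x := fun x hx => by
    simp only [hc2, max_eq_right hx.1, min_eq_right hx.2]
  set g : ℝ → ℝ → ℝ := fun x1 x2 => f (c1 x1) (c2 x2) with hg
  have hgcont : Continuous (Function.uncurry g) := by
    have hclamp : Continuous (fun p : ℝ × ℝ => ((c1 p.1, c2 p.2) : ℝ × ℝ)) := by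
      fun_prop
    have := hcont.comp_continuous hclamp (fun p => ⟨hc1mem p.1, hc2mem p.2⟩)
    exact this
  -- the inner integral
  set F : ℝ → ℝ := fun x1 => ∫ x2 in (-1 : ℝ)..1, g x1 x2 with hF
  have hFcont : Continuous F :=
    continuous_parametric_intervalIntegral_of_continuous' hgcont (-1) 1
  have hFint : ∀ a b : ℝ, IntervalIntegrable F volume a b := fun a b =>
    hFcont.intervalIntegrable a b
  -- rewrite goal in terms of F
  have hinner : ∀ x1 ∈ Set.Icc (-3 : ℝ) 3,
      (∫ x2 in (-1 : ℝ)..1, f x1 x2) = F x1 := by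
    intro x1 hx1
    apply intervalIntegral.integral_congr
    intro x2 hx2
    rw [Set.uIcc_of_le (by norm_num : (-1:ℝ) ≤ 1)] at hx2
    simp only [hg, hc1eq x1 hx1, hc2eq x2 hx2]
  have houter : (∫ x1 in (-3 : ℝ)..3, ∫ x2 in (-1 : ℝ)..1, f x1 x2) =
      ∫ x1 in (-3 : ℝ)..3, F x1 := by
    apply intervalIntegral.integral_congr
    intro x1 hx1
    rw [Set.uIcc_of_le (by norm_num : (-3:ℝ) ≤ 3)] at hx1
    exact hinner x1 hx1
  have houter2 : (∫ x1 in (-1 : ℝ)..1, ∫ x2 in (-1 : ℝ)..1, f x1 x2) =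
      ∫ x1 in (-1 : ℝ)..1, F x1 := by
    apply intervalIntegral.integral_congr
    intro x1 hx1
    rw [Set.uIcc_of_le (by norm_num : (-1:ℝ) ≤ 1)] at hx1
    exact hinner x1 ⟨by linarith [hx1.1], by linarith [hx1.2]⟩
  rw [houter, houter2]
  -- midpoint inequality for F
  have hmid : ∀ x ∈ Set.Icc (-1 : ℝ) 1, F (x - 2) + F (x + 2) ≤ 2 * F x := by
    intro x hx
    have hxm : x - 2 ∈ Set.Icc (-3 : ℝ) 3 := ⟨by linarith [hx.1], by linarith [hx.2]⟩
    have hxp : x + 2 ∈ Set.Icc (-3 : ℝ) 3 := ⟨by linarith [hx.1], by linarith [hx.2]⟩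
    have hxx : x ∈ Set.Icc (-3 : ℝ) 3 := ⟨by linarith [hx.1], by linarith [hx.2]⟩
    have hpt : ∀ x2 ∈ Set.Icc (-1 : ℝ) 1,
        g (x - 2) x2 + g (x + 2) x2 ≤ 2 * g x x2 := by
      intro x2 hx2
      have h := (hconc x2 hx2).2 hxm hxp (by norm_num : (0:ℝ) ≤ 1/2)
        (by norm_num : (0:ℝ) ≤ 1/2) (by norm_num)
      have hxeq : (1/2 : ℝ) • (x - 2) + (1/2 : ℝ) • (x + 2) = x := by ring_nf
      rw [hxeq] at h
      simp only [smul_eq_mul] at h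
      simp only [hg, hc1eq _ hxm, hc1eq _ hxp, hc1eq _ hxx, hc2eq _ hx2]
      linarith
    have hintm : IntervalIntegrable (fun x2 => g (x - 2) x2) volume (-1) 1 :=
      (hgcont.comp (Continuous.prodMk_right (x - 2))).intervalIntegrable _ _
    have hintp : IntervalIntegrable (fun x2 => g (x + 2) x2) volume (-1) 1 :=
      (hgcont.comp (Continuous.prodMk_right (x + 2))).intervalIntegrable _ _
    have hintx : IntervalIntegrable (fun x2 => g x x2) volume (-1) 1 :=
      (hgcont.comp (Continuous.prodMk_right x)).intervalIntegrable _ _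
    have hsum : F (x - 2) + F (x + 2) =
        ∫ x2 in (-1 : ℝ)..1, (g (x - 2) x2 + g (x + 2) x2) := by
      rw [intervalIntegral.integral_add hintm hintp]
    have h2 : (2 : ℝ) * F x = ∫ x2 in (-1 : ℝ)..1, 2 * g x x2 := by
      rw [intervalIntegral.integral_const_mul]
    rw [hsum, h2]
    apply intervalIntegral.integral_mono_on (by norm_num) (hintm.add hintp)
      (hintx.const_mul 2)
    exact hpt
  -- split the big integral
  have hsplit : (∫ x1 in (-3 : ℝ)..3, F x1) =
      (∫ x1 in (-3 : ℝ)..(-1), F x1) + (∫ x1 in (-1 : ℝ)..1, F x1)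
        + ∫ x1 in (1 : ℝ)..3, F x1 := by
    rw [intervalIntegral.integral_add_adjacent_intervals (hFint (-3) (-1)) (hFint (-1) 1),
      intervalIntegral.integral_add_adjacent_intervals (hFint (-3) 1) (hFint 1 3)]
  have hleft : (∫ x1 in (-3 : ℝ)..(-1), F x1) = ∫ x1 in (-1 : ℝ)..1, F (x1 - 2) := by
    rw [intervalIntegral.integral_comp_sub_right (a := -1) (b := 1) F 2]
    norm_num
  have hright : (∫ x1 in (1 : ℝ)..3, F x1) = ∫ x1 in (-1 : ℝ)..1, F (x1 + 2) := by
    rw [intervalIntegral.integral_comp_add_right (a := -1) (b := 1) F 2]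
    norm_num
  have hintm : IntervalIntegrable (fun x1 => F (x1 - 2)) volume (-1) 1 :=
    (hFcont.comp (by fun_prop : Continuous fun x1 : ℝ => x1 - 2)).intervalIntegrable _ _
  have hintp : IntervalIntegrable (fun x1 => F (x1 + 2)) volume (-1) 1 :=
    (hFcont.comp (by fun_prop : Continuous fun x1 : ℝ => x1 + 2)).intervalIntegrable _ _
  have hmono : (∫ x1 in (-1 : ℝ)..1, (F (x1 - 2) + F (x1 + 2))) ≤
      ∫ x1 in (-1 : ℝ)..1, 2 * F x1 := by
    apply intervalIntegral.integral_mono_on (by norm_num) (hintm.add hintp)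
      ((hFint (-1) 1).const_mul 2)
    exact hmid
  rw [intervalIntegral.integral_add hintm hintp, intervalIntegral.integral_const_mul] at hmono
  rw [hsplit, hleft, hright]
  linarith
end

section
/- There exists a constant $c > 0$ with the following property. Let $A$ be a real antisymmetric $4\times 4$ matrix with $A_{12} = 0$ and $A_{34} = 0$. Let $\gamma(x_1,x_2,\theta) = (x_1, x_2, \sqrt{2}\cos\theta, \sqrt{2}\sin\theta) \in \mathbb{R}^4$ and $\nu(\theta) = (0,0,\cos\theta,\sin\theta)$. Then $\int_{\mathbb{R}^2\times(0,2\pi)} \langle A\,\gamma(x_1,x_2,\theta),\, \nu(\theta) \rangle^2 \, e^{-(x_1^2+x_2^2)/4}\, dx_1\, dx_2\, d\theta \;\ge\; c\,\|A\|^2$, where $\|A\|$ is the Frobenius norm. In particular, the only antisymmetric $4\times4$ matrix $A$ with $A_{12}=A_{34}=0$ for which $\langle A\,\gamma(x_1,x_2,\theta), \nu(\theta)\rangle$ vanishes identically is $A = 0$. -/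
open Matrix

/-- Parametrization of the bubble-sheet cylinder `Γ = ℝ² × S¹(√2) ⊆ ℝ⁴`. -/
noncomputable def bubbleSheet (x1 x2 θ : ℝ) : Fin 4 → ℝ :=
  ![x1, x2, Real.sqrt 2 * Real.cos θ, Real.sqrt 2 * Real.sin θ]

/-- The outward unit normal of the bubble-sheet cylinder. -/
noncomputable def bubbleSheetNormal (θ : ℝ) : Fin 4 → ℝ :=
  ![0, 0, Real.cos θ, Real.sin θ]


open Real MeasureTheory


lemma my_I0 : Integrable fun x : ℝ => Real.exp (-(x^2)/4) := by
  have h : ∀ x : ℝ, -(x^2)/4 = -(4⁻¹:ℝ) * x^2 := fun x => by ring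
  simp_rw [h]
  exact integrable_exp_neg_mul_sq (by norm_num)

lemma my_I1 : Integrable fun x : ℝ => x * Real.exp (-(x^2)/4) := by
  have h : ∀ x : ℝ, -(x^2)/4 = -(4⁻¹:ℝ) * x^2 := fun x => by ring
  simp_rw [h]
  exact integrable_mul_exp_neg_mul_sq (by norm_num)

lemma my_I2 : Integrable fun x : ℝ => x^2 * Real.exp (-(x^2)/4) := by
  have h : ∀ x : ℝ, -(x^2)/4 = -(4⁻¹:ℝ) * x^2 := fun x => by ring
  simp_rw [h]
  have := integrable_rpow_mul_exp_neg_mul_sq (b := (4⁻¹:ℝ)) (by norm_num) (s := 2) (by norm_num)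
  simpa [Real.rpow_two] using this

lemma my_G0 : ∫ x : ℝ, Real.exp (-(x^2)/4) = 2 * Real.sqrt π := by
  have h : ∀ x : ℝ, -(x^2)/4 = -(4⁻¹:ℝ) * x^2 := fun x => by ring
  simp_rw [h, integral_gaussian]
  rw [show π / (4⁻¹:ℝ) = 4 * π by ring, show (4:ℝ) * π = 2^2 * π by norm_num,
    Real.sqrt_mul (by positivity), Real.sqrt_sq (by norm_num)]

lemma my_G1 : ∫ x : ℝ, x * Real.exp (-(x^2)/4) = 0 := by
  have A : MeasurePreserving (fun x:ℝ => -x) volume volume := Measure.measurePreserving_neg _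
  have := A.integral_comp (Homeomorph.neg ℝ).measurableEmbedding
    (fun x => x * Real.exp (-(x^2)/4))
  simp only [neg_sq] at this
  have h2 : ∫ x : ℝ, -x * Real.exp (-(x^2)/4) = -∫ x : ℝ, x * Real.exp (-(x^2)/4) := by
    rw [← integral_neg]; congr 1; funext x; ring
  rw [h2] at this
  linarith

lemma my_G2 : ∫ x : ℝ, x^2 * Real.exp (-(x^2)/4) = 4 * Real.sqrt π := by
  have hu : ∀ x : ℝ, HasDerivAt (fun y : ℝ => y) 1 x := fun x => hasDerivAt_id x
  have hv : ∀ x : ℝ, HasDerivAt (fun y : ℝ => -2 * Real.exp (-(y^2)/4))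
      (x * Real.exp (-(x^2)/4)) x := by
    intro x
    have h1 : HasDerivAt (fun y : ℝ => -(y^2)/4) (-x/2) x := by
      have := ((hasDerivAt_pow 2 x).neg).div_const 4
      simpa using this.congr_deriv (by ring)
    have := (h1.exp).const_mul (-2 : ℝ)
    exact this.congr_deriv (by ring)
  have Iuv' : Integrable ((fun y:ℝ => y) * fun x : ℝ => x * Real.exp (-(x^2)/4)) :=
    my_I2.congr (Filter.Eventually.of_forall fun x => by simp [Pi.mul_apply]; ring)
  have Iu'v : Integrable ((fun _ : ℝ => (1:ℝ)) * fun x : ℝ => -2 * Real.exp (-(x^2)/4)) :=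
    (my_I0.const_mul (-2)).congr (Filter.Eventually.of_forall fun x => by simp [Pi.mul_apply])
  have Iuv : Integrable ((fun y:ℝ => y) * fun x : ℝ => -2 * Real.exp (-(x^2)/4)) :=
    (my_I1.const_mul (-2)).congr (Filter.Eventually.of_forall fun x => by
      simp [Pi.mul_apply]; ring)
  calc ∫ x : ℝ, x^2 * Real.exp (-(x^2)/4)
      = ∫ x : ℝ, x * (x * Real.exp (-(x^2)/4)) := by congr 1; funext x; ring
    _ = -∫ x : ℝ, (1:ℝ) * (-2 * Real.exp (-(x^2)/4)) :=
        integral_mul_deriv_eq_deriv_mul_of_integrable (fun x _ => hu x) (fun x _ => hv x) Iuv' Iu'v Iuv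
    _ = 4 * Real.sqrt π := by
        simp_rw [one_mul, integral_const_mul, my_G0]; ring

lemma my_quad (a b c : ℝ) :
    ∫ x : ℝ, (a*x^2 + b*x + c) * Real.exp (-(x^2)/4)
      = 4 * Real.sqrt π * a + 2 * Real.sqrt π * c := by
  have h : ∀ x : ℝ, (a*x^2 + b*x + c) * Real.exp (-(x^2)/4)
      = a * (x^2 * Real.exp (-(x^2)/4)) + (b * (x * Real.exp (-(x^2)/4))
        + c * Real.exp (-(x^2)/4)) := fun x => by ring
  simp_rw [h]
  have hbc : Integrable (fun x : ℝ => b * (x * Real.exp (-(x^2)/4)) + c * Real.exp (-(x^2)/4)) :=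
    (my_I1.const_mul b).add (my_I0.const_mul c)
  have ha : Integrable (fun x : ℝ => a * (x^2 * Real.exp (-(x^2)/4))) := my_I2.const_mul a
  have hb : Integrable (fun x : ℝ => b * (x * Real.exp (-(x^2)/4))) := my_I1.const_mul b
  have hc : Integrable (fun x : ℝ => c * Real.exp (-(x^2)/4)) := my_I0.const_mul c
  rw [integral_add ha hbc, integral_add hb hc,
    integral_const_mul, integral_const_mul, integral_const_mul, my_G0, my_G1, my_G2]
  ring

lemma my_quad_int (a b c : ℝ) :
    Integrable (fun x : ℝ => (a*x^2 + b*x + c) * Real.exp (-(x^2)/4)) := by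
  have h : ∀ x : ℝ, (a*x^2 + b*x + c) * Real.exp (-(x^2)/4)
      = a * (x^2 * Real.exp (-(x^2)/4)) + (b * (x * Real.exp (-(x^2)/4))
        + c * Real.exp (-(x^2)/4)) := fun x => by ring
  simp_rw [h]
  exact (my_I2.const_mul a).add ((my_I1.const_mul b).add (my_I0.const_mul c))

lemma my_trig (α β : ℝ) :
    ∫ θ in (0:ℝ)..(2*π), (α * Real.cos θ + β * Real.sin θ)^2 = π * (α^2 + β^2) := by
  have h : ∀ θ : ℝ, (α * Real.cos θ + β * Real.sin θ)^2
      = α^2 * Real.cos θ^2 + ((2*α*β) * (Real.sin θ * Real.cos θ) + β^2 * Real.sin θ^2) :=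
    fun θ => by ring
  simp_rw [h]
  rw [intervalIntegral.integral_add, intervalIntegral.integral_add,
    intervalIntegral.integral_const_mul, intervalIntegral.integral_const_mul,
    intervalIntegral.integral_const_mul, integral_cos_sq, integral_sin_mul_cos₁,
    integral_sin_sq]
  · simp [Real.sin_two_pi, Real.cos_two_pi]; ring
  all_goals exact (Continuous.intervalIntegrable (by continuity) _ _)

/-- The Gaussian bilinear form `A ↦ ∫_Γ ⟨Ax, ν⟩² e^{-|x|²/4}` is uniformly
positive definite on the space of antisymmetric `4×4` matrices with
`A₁₂ = A₃₄ = 0`.  In particular the only such matrix for which `⟨Ax, ν⟩`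
vanishes identically on the cylinder is `A = 0`. -/
theorem rotation_form_positive_definite :
    ∃ c > (0:ℝ), ∀ A : Matrix (Fin 4) (Fin 4) ℝ,
      Aᵀ = -A → A 0 1 = 0 → A 2 3 = 0 →
      (c * (∑ i : Fin 4, ∑ j : Fin 4, (A i j) ^ 2) ≤
        ∫ x1 : ℝ, ∫ x2 : ℝ, ∫ θ in (0:ℝ)..(2 * Real.pi),
          (A.mulVec (bubbleSheet x1 x2 θ) ⬝ᵥ bubbleSheetNormal θ) ^ 2
            * Real.exp (-(x1 ^ 2 + x2 ^ 2) / 4)) ∧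
      ((∀ x1 x2 θ : ℝ, A.mulVec (bubbleSheet x1 x2 θ) ⬝ᵥ bubbleSheetNormal θ = 0) →
        A = 0) := by
  refine ⟨4 * π^2, by positivity, fun A hT h01 h23 => ?_⟩
  have hd : ∀ i j, A j i = -A i j := fun i j => by
    have := congrFun (congrFun hT i) j
    simpa [Matrix.transpose_apply, Matrix.neg_apply] using this
  have hdiag : ∀ i, A i i = 0 := fun i => by have := hd i i; linarith
  have h10 : A 1 0 = 0 := by rw [hd 0 1, h01, neg_zero]
  have h32 : A 3 2 = 0 := by rw [hd 2 3, h23, neg_zero]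
  set p := A 2 0 with hp'
  set q := A 2 1 with hq'
  set r := A 3 0 with hr'
  set s := A 3 1 with hs'
  have key : ∀ x1 x2 θ : ℝ, A.mulVec (bubbleSheet x1 x2 θ) ⬝ᵥ bubbleSheetNormal θ
      = (p * x1 + q * x2) * Real.cos θ + (r * x1 + s * x2) * Real.sin θ := by
    intro x1 x2 θ
    simp [bubbleSheet, bubbleSheetNormal, Matrix.mulVec, dotProduct,
      Fin.sum_univ_four, hdiag 2, hdiag 3, h32, h23]
    rfl
  constructor
  · have step1 : ∀ x1 x2 : ℝ, (∫ θ in (0:ℝ)..(2*π),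
        (A.mulVec (bubbleSheet x1 x2 θ) ⬝ᵥ bubbleSheetNormal θ) ^ 2
          * Real.exp (-(x1 ^ 2 + x2 ^ 2) / 4))
        = π * ((p*x1+q*x2)^2 + (r*x1+s*x2)^2) * Real.exp (-(x1 ^ 2 + x2 ^ 2) / 4) := by
      intro x1 x2
      simp_rw [key]
      rw [intervalIntegral.integral_mul_const, my_trig]
    have step2 : ∀ x1 : ℝ, (∫ x2 : ℝ,
        π * ((p*x1+q*x2)^2 + (r*x1+s*x2)^2) * Real.exp (-(x1 ^ 2 + x2 ^ 2) / 4))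
        = (π * Real.exp (-(x1^2)/4)) *
            (4 * Real.sqrt π * (q^2+s^2) + 2 * Real.sqrt π * ((p^2+r^2)*x1^2)) := by
      intro x1
      have point : ∀ x2 : ℝ, π * ((p*x1+q*x2)^2 + (r*x1+s*x2)^2)
            * Real.exp (-(x1 ^ 2 + x2 ^ 2) / 4)
          = (π * Real.exp (-(x1^2)/4)) *
            (((q^2+s^2)*x2^2 + (2*x1*(p*q+r*s))*x2 + (p^2+r^2)*x1^2)
              * Real.exp (-(x2^2)/4)) := by
        intro x2
        rw [show -(x1 ^ 2 + x2 ^ 2) / 4 = -(x1^2)/4 + -(x2^2)/4 by ring, Real.exp_add]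
        ring
      simp_rw [point]
      rw [MeasureTheory.integral_const_mul, my_quad]
    simp_rw [step1, step2]
    have point3 : ∀ x1 : ℝ, (π * Real.exp (-(x1^2)/4)) *
          (4 * Real.sqrt π * (q^2+s^2) + 2 * Real.sqrt π * ((p^2+r^2)*x1^2))
        = ((2 * Real.sqrt π * π * (p^2+r^2)) * x1^2 + 0 * x1
            + 4 * Real.sqrt π * π * (q^2+s^2)) * Real.exp (-(x1^2)/4) := fun x1 => by ring
    simp_rw [point3]
    rw [my_quad]
    have hsum : (∑ i : Fin 4, ∑ j : Fin 4, (A i j) ^ 2) = 2*(p^2+q^2+r^2+s^2) := by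
      have e02 : A 0 2 = -p := hd 2 0
      have e12 : A 1 2 = -q := hd 2 1
      have e03 : A 0 3 = -r := hd 3 0
      have e13 : A 1 3 = -s := hd 3 1
      simp [Fin.sum_univ_four, hdiag 0, hdiag 1, hdiag 2, hdiag 3, h01, h10, h23, h32,
        e02, e12, e03, e13]
      ring
    rw [hsum]
    have hπ : Real.sqrt π * Real.sqrt π = π := Real.mul_self_sqrt Real.pi_pos.le
    have h2 : 4 * Real.sqrt π * (2 * Real.sqrt π * π * (p^2+r^2))
        + 2 * Real.sqrt π * (4 * Real.sqrt π * π * (q^2+s^2))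
        = 8 * π^2 * (p^2+q^2+r^2+s^2) := by
      linear_combination (8 * π * (p^2+q^2+r^2+s^2)) * hπ
    rw [h2]
    apply le_of_eq
    ring
  · intro h
    have hp : p = 0 := by have := h 1 0 0; rw [key] at this; simpa using this
    have hq : q = 0 := by have := h 0 1 0; rw [key] at this; simpa using this
    have hr : r = 0 := by have := h 1 0 (π/2); rw [key] at this; simpa using this
    have hs : s = 0 := by have := h 0 1 (π/2); rw [key] at this; simpa using this
    have e02 : A 0 2 = 0 := by rw [hd 2 0, ← hp', hp, neg_zero]
    have e12 : A 1 2 = 0 := by rw [hd 2 1, ← hq', hq, neg_zero]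
    have e03 : A 0 3 = 0 := by rw [hd 3 0, ← hr', hr, neg_zero]
    have e13 : A 1 3 = 0 := by rw [hd 3 1, ← hs', hs, neg_zero]
    ext i j
    fin_cases i <;> fin_cases j <;> simp only [Matrix.zero_apply] <;>
      first
        | exact hdiag _
        | exact h01 | exact h10 | exact h23 | exact h32
        | exact e02 | exact e12 | exact e03 | exact e13
        | exact hp | exact hq | exact hr | exact hs
end
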